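/- Let g be a real Lie algebra with an invariant inner product Q, a ⊆ g an abelian Lie subalgebra with orthogonal complement n = a^⊥, and write X = X_a + X_n. Fix t ∈ ℝ, t ≠ 1, let B̄ be the symmetric bilinear form on g × a given by B̄((u,p),(v,q)) = Q(u,v) + (t/(1−t))Q(p,q), let X̄ = (X_n + tX_a, (t−1)X_a), and let Δ = {(p,p) : p ∈ a}. Regard g × a as the product Lie algebra (with a abelian). Then for all X,Y ∈ g: (i) [X̄,Ȳ] = ([X_n + tX_a, Y_n + tY_a], 0); (ii) the unique element v ∈ Δ such that [X̄,Ȳ] − v is B̄-orthogonal to Δ is v = ((1−t)[X_n,Y_n]_a, (1−t)[X_n,Y_n]_a); and (iii) setting A(X,Y) := (1/2)(1−t)·([X_n,Y_n]_a, [X_n,Y_n]_a), one has B̄(A(X,Y), A(Z,W)) = ((1−t)/4)·Q([X_n,Y_n]_a, [Z_n,W_n]_a) for all X,Y,Z,W ∈ g. (This computes the Gray–O'Neill A-tensor of the semi-Riemannian submersion π(g,a) = a⁻¹g and establishes the formula ⟨α(X̄∧Ȳ), Z̄∧W̄⟩ = ((1−t)/4)Q([X_n,Y_n]_a,[Z_n,W_n]_a).)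 -/

import Mathlib

open RealInnerProductSpace

attribute [-instance] LieRing.toAddCommGroup

variable {g : Type*} [LieRing g] [NormedAddCommGroup g] [InnerProductSpace ℝ g]
  [FiniteDimensional ℝ g]

/-- The component `X_a` of `X` in the orthogonal decomposition `X = X_a + X_n`
determined by the subspace `a` (so that `X_n = X - X_a`). -/
noncomputable def compA (a : Submodule ℝ g) (X : g) : g :=
  (Submodule.orthogonalProjectionOnto a X : g)

/-- The (possibly indefinite) symmetric bilinear form
`B̄((u,p),(v,q)) = Q(u,v) + (t/(1−t))·Q(p,q)` on `g × a`. -/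
noncomputable def Bbar (a : Submodule ℝ g) (t : ℝ) (x y : g × a) : ℝ :=
  ⟪x.1, y.1⟫ + (t / (1 - t)) * ⟪(x.2 : g), (y.2 : g)⟫

/-- The lift `X̄ = (X_n + t·X_a, (t−1)·X_a) ∈ g × a`. -/
noncomputable def hlift (a : Submodule ℝ g) (t : ℝ) (X : g) : g × a :=
  ((X - compA a X) + t • compA a X, (t - 1) • Submodule.orthogonalProjectionOnto a X)

/-- The componentwise bracket on `g × a`, for a Lie subalgebra `a` of `g` (this is the
bracket of the product Lie algebra `g × a`). -/
def bracketProd (a : Submodule ℝ g) (hsub : ∀ x y : g, x ∈ a → y ∈ a → ⁅x, y⁆ ∈ a)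
    (x y : g × a) : g × a :=
  (⁅x.1, y.1⁆, ⟨⁅(x.2 : g), (y.2 : g)⁆, hsub _ _ x.2.2 y.2.2⟩)

/-- The Gray–O'Neill `A`-tensor
`A(X,Y) = (1/2)(1−t)·([X_n,Y_n]_a, [X_n,Y_n]_a) ∈ g × a`. -/
noncomputable def Atensor (a : Submodule ℝ g) (t : ℝ) (X Y : g) : g × a :=
  ((1/2) * (1 - t)) • ((compA a ⁅X - compA a X, Y - compA a Y⁆ : g),
    Submodule.orthogonalProjectionOnto a ⁅X - compA a X, Y - compA a Y⁆)


lemma inner_compA (a : Submodule ℝ g) (X q : g) (hq : q ∈ a) :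
    ⟪compA a X, q⟫ = ⟪X, q⟫ := by
  have h : X - compA a X ∈ aᗮ := Submodule.sub_starProjection_mem_orthogonal (K := a) X
  have h0 : ⟪X - compA a X, q⟫ = 0 := by
    rw [real_inner_comm]; exact h q hq
  have h2 := inner_sub_left (𝕜 := ℝ) X (compA a X) q
  linarith

/-- computation of the Gray–O'Neill `A`-tensor of the semi-Riemannian
submersion `π(g,a) = a⁻¹g`: (i) the bracket of two lifts is
`([X_n + tX_a, Y_n + tY_a], 0)`; (ii) its `B̄`-orthogonal projection onto the diagonal
`Δ = {(p,p) : p ∈ a}` is the unique `v = ((1−t)[X_n,Y_n]_a, (1−t)[X_n,Y_n]_a)`;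
(iii) `B̄(A(X,Y), A(Z,W)) = ((1−t)/4)·Q([X_n,Y_n]_a, [Z_n,W_n]_a)`. -/
theorem Atensor_of_backwards_cheeger
    (hsmul : ∀ (c : ℝ) (X Y : g), ⁅c • X, Y⁆ = c • ⁅X, Y⁆)
    (hinv : ∀ X Y Z : g, ⟪⁅X, Y⁆, Z⟫ = ⟪X, ⁅Y, Z⁆⟫)
    (a : Submodule ℝ g) (hsub : ∀ x y : g, x ∈ a → y ∈ a → ⁅x, y⁆ ∈ a)
    (habelian : ∀ x y : g, x ∈ a → y ∈ a → ⁅x, y⁆ = 0)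
    (t : ℝ) (ht : t ≠ 1) :
    (∀ X Y : g, bracketProd a hsub (hlift a t X) (hlift a t Y) =
      (⁅(X - compA a X) + t • compA a X, (Y - compA a Y) + t • compA a Y⁆, 0)) ∧
    (∀ X Y : g, ∀ p : a,
      ((∀ q : a, Bbar a t
          (bracketProd a hsub (hlift a t X) (hlift a t Y) - ((p : g), p)) ((q : g), q) = 0)
        ↔ p = (1 - t) • Submodule.orthogonalProjectionOnto a ⁅X - compA a X, Y - compA a Y⁆)) ∧
    (∀ X Y Z W : g, Bbar a t (Atensor a t X Y) (Atensor a t Z W) =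
      ((1 - t) / 4) * ⟪compA a ⁅X - compA a X, Y - compA a Y⁆,
        compA a ⁅Z - compA a Z, W - compA a W⁆⟫) := by
  have h1t : (1 : ℝ) - t ≠ 0 := sub_ne_zero.mpr (Ne.symm ht)
  have hmemA : ∀ Z : g, compA a Z ∈ a := fun Z => (Submodule.orthogonalProjectionOnto a Z).2
  have hext : ∀ x y : g, (∀ z : g, ⟪x, z⟫ = ⟪y, z⟫) → x = y := fun x y h =>
    ext_inner_right ℝ h
  -- bracket is additive w.r.t. the normed additive structure, by nondegeneracy
  have add_lie' : ∀ A B C : g, ⁅A + B, C⁆ = ⁅A, C⁆ + ⁅B, C⁆ := by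
    intro A B C
    refine hext _ _ fun z => ?_
    rw [hinv, inner_add_left, inner_add_left, hinv, hinv]
  have lie_add' : ∀ A B C : g, ⁅A, B + C⁆ = ⁅A, B⁆ + ⁅A, C⁆ := by
    intro A B C
    refine hext _ _ fun z => ?_
    rw [hinv, add_lie' B C z, inner_add_right, inner_add_left, hinv, hinv]
  -- Part (i)
  have part1 : ∀ X Y : g, bracketProd a hsub (hlift a t X) (hlift a t Y) =
      (⁅(X - compA a X) + t • compA a X, (Y - compA a Y) + t • compA a Y⁆, 0) := by
    intro X Y
    unfold bracketProd hlift
    refine Prod.ext rfl (Subtype.ext ?_)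
    simp only [ZeroMemClass.coe_zero]
    exact habelian _ _ (Submodule.coe_mem _) (Submodule.coe_mem _)
  -- key bracket computation
  have hkey : ∀ X Y q : g, q ∈ a →
      ⟪⁅(X - compA a X) + t • compA a X, (Y - compA a Y) + t • compA a Y⁆, q⟫
        = ⟪compA a ⁅X - compA a X, Y - compA a Y⁆, q⟫ := by
    intro X Y q hq
    have f1 : ⟪⁅X - compA a X, t • compA a Y⁆, q⟫ = 0 := by
      rw [hinv, habelian _ _ (a.smul_mem t (hmemA Y)) hq, inner_zero_right]
    have f2 : ⟪⁅t • compA a X, Y - compA a Y⁆, q⟫ = 0 := by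
      rw [hinv, real_inner_comm, hinv, habelian _ _ hq (a.smul_mem t (hmemA X)),
        inner_zero_right]
    have f3 : ⟪⁅t • compA a X, t • compA a Y⁆, q⟫ = 0 := by
      rw [habelian _ _ (a.smul_mem t (hmemA X)) (a.smul_mem t (hmemA Y)), inner_zero_left]
    have f4 := inner_compA a ⁅X - compA a X, Y - compA a Y⁆ q hq
    rw [add_lie', lie_add', lie_add', inner_add_left, inner_add_left, inner_add_left,
      f1, f2, f3, f4]
    ring
  refine ⟨part1, ?_, ?_⟩
  -- Part (ii)
  · intro X Y p
    rw [part1 X Y]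
    set w : g := compA a ⁅X - compA a X, Y - compA a Y⁆ with hw
    have key : ∀ q : a, Bbar a t
        ((⁅(X - compA a X) + t • compA a X, (Y - compA a Y) + t • compA a Y⁆, (0 : a))
          - ((p : g), p)) ((q : g), q)
        = (1 / (1 - t)) * ⟪(1 - t) • w - (p : g), (q : g)⟫ := by
      intro q
      unfold Bbar
      simp only [Prod.fst_sub, Prod.snd_sub, zero_sub, Submodule.coe_neg,
        inner_sub_left, inner_neg_left, inner_smul_left, real_inner_smul_left]
      rw [hkey X Y q q.2, ← hw]
      field_simp
      rw [conj_trivial]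
      ring
    constructor
    · intro H
      have h0 := H ((1 - t) • Submodule.orthogonalProjectionOnto a ⁅X - compA a X, Y - compA a Y⁆ - p)
      rw [key] at h0
      have hco : (((1 - t) • Submodule.orthogonalProjectionOnto a ⁅X - compA a X, Y - compA a Y⁆ - p : a) : g)
          = (1 - t) • w - (p : g) := by
        push_cast
        rfl
      rw [hco] at h0
      have hne : (1 : ℝ) / (1 - t) ≠ 0 := one_div_ne_zero h1t
      have h2 : ⟪(1 - t) • w - (p : g), (1 - t) • w - (p : g)⟫ = 0 :=
        (mul_eq_zero.mp h0).resolve_left hne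
      have h3 : (1 - t) • w - (p : g) = 0 := inner_self_eq_zero.mp h2
      have h4 : (p : g) = (1 - t) • w := (sub_eq_zero.mp h3).symm
      apply Subtype.ext
      rw [Submodule.coe_smul]
      exact h4
    · intro hp q
      rw [key, hp]
      have hco : (((1 - t) • Submodule.orthogonalProjectionOnto a ⁅X - compA a X, Y - compA a Y⁆ : a) : g)
          = (1 - t) • w := by
        push_cast
        rfl
      rw [hco, sub_self, inner_zero_left, mul_zero]
  -- Part (iii)
  · intro X Y Z W
    unfold Bbar Atensor
    simp only [Prod.smul_fst, Prod.smul_snd, Submodule.coe_smul, compA,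
      real_inner_smul_left, real_inner_smul_right]
    field_simp
    ring
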